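/- Let P be an n×n real stochastic matrix with stationary distribution π whose entries are all strictly positive, let Φ = diag(π), and let ℒ = I − (Φ^{1/2} P Φ^{-1/2} + Φ^{-1/2} Pᵀ Φ^{1/2})/2 be the directed-graph Laplacian. Then ℒ is positive semidefinite: for every z ∈ ℝⁿ, zᵀ ℒ z ≥ 0. -/

import Mathlib

open Matrix

/-- The directed-graph Laplacian
`ℒ = I − (Φ^{1/2} P Φ^{-1/2} + Φ^{-1/2} Pᵀ Φ^{1/2})/2` is positive semidefinite:
`zᵀ ℒ z ≥ 0` for every `z ∈ ℝⁿ`. -/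
theorem directed_laplacian_posSemidef
    (n : ℕ) (P : Matrix (Fin n) (Fin n) ℝ) (π : Fin n → ℝ)
    (hP_nonneg : ∀ u v, 0 ≤ P u v)
    (hP_rowsum : ∀ u, ∑ v, P u v = 1)
    (hπ_pos : ∀ u, 0 < π u)
    (hπ_stat : ∀ v, ∑ u, π u * P u v = π v)
    (z : Fin n → ℝ) :
    0 ≤ z ⬝ᵥ (1 - (2⁻¹ : ℝ) •
        (Matrix.diagonal (fun i => Real.sqrt (π i)) * P *
            Matrix.diagonal (fun i => 1 / Real.sqrt (π i)) +
          Matrix.diagonal (fun i => 1 / Real.sqrt (π i)) * Pᵀ *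
            Matrix.diagonal (fun i => Real.sqrt (π i)))).mulVec z := by
  set x : Fin n → ℝ := fun i => z i / Real.sqrt (π i) with hx
  have hs : ∀ i, 0 < Real.sqrt (π i) := fun i => Real.sqrt_pos.mpr (hπ_pos i)
  have hsq : ∀ i, Real.sqrt (π i) * Real.sqrt (π i) = π i :=
    fun i => Real.mul_self_sqrt (hπ_pos i).le
  have hxe : ∀ i, x i = z i / Real.sqrt (π i) := fun i => rfl
  have hent1 : ∀ u v, (Matrix.diagonal (fun i => Real.sqrt (π i)) * P *
        Matrix.diagonal (fun i => 1 / Real.sqrt (π i))) u v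
      = Real.sqrt (π u) * P u v * (1 / Real.sqrt (π v)) := by
    intro u v
    rw [Matrix.mul_diagonal, Matrix.diagonal_mul]
  have hent2 : ∀ u v, (Matrix.diagonal (fun i => 1 / Real.sqrt (π i)) * Pᵀ *
        Matrix.diagonal (fun i => Real.sqrt (π i))) u v
      = (1 / Real.sqrt (π u)) * P v u * Real.sqrt (π v) := by
    intro u v
    rw [Matrix.mul_diagonal, Matrix.diagonal_mul, Matrix.transpose_apply]
  have e1 : z ⬝ᵥ (Matrix.diagonal (fun i => Real.sqrt (π i)) * P *
          Matrix.diagonal (fun i => 1 / Real.sqrt (π i))).mulVec z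
      = ∑ u, ∑ v, π u * P u v * (x u * x v) := by
    simp only [dotProduct, mulVec, hent1, Finset.mul_sum]
    refine Finset.sum_congr rfl fun u _ => Finset.sum_congr rfl fun v _ => ?_
    have hune := (hs u).ne'
    have hvne := (hs v).ne'
    rw [hxe u, hxe v]
    field_simp
    linear_combination z u * P u v * z v * hsq u
  have e2 : z ⬝ᵥ (Matrix.diagonal (fun i => 1 / Real.sqrt (π i)) * Pᵀ *
          Matrix.diagonal (fun i => Real.sqrt (π i))).mulVec z
      = ∑ u, ∑ v, π u * P u v * (x u * x v) := by
    rw [Finset.sum_comm]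
    simp only [dotProduct, mulVec, hent2, Finset.mul_sum]
    refine Finset.sum_congr rfl fun u _ => Finset.sum_congr rfl fun v _ => ?_
    have hune := (hs u).ne'
    have hvne := (hs v).ne'
    rw [hxe u, hxe v]
    field_simp
    linear_combination z u * P v u * z v * hsq v
  have r1 : ∑ u, ∑ v, π u * P u v * (x u * x u) = ∑ u, z u * z u := by
    refine Finset.sum_congr rfl fun u _ => ?_
    have h : ∑ v, π u * P u v * (x u * x u) = π u * (∑ v, P u v) * (x u * x u) := by
      rw [Finset.mul_sum, Finset.sum_mul]
    have hune := (hs u).ne'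
    rw [h, hP_rowsum u, mul_one, hxe u]
    field_simp
    linear_combination (-(z u * z u)) * hsq u
  have r2 : ∑ u, ∑ v, π u * P u v * (x v * x v) = ∑ u, z u * z u := by
    rw [Finset.sum_comm]
    refine Finset.sum_congr rfl fun v _ => ?_
    rw [show ∑ u, π u * P u v * (x v * x v) = (∑ u, π u * P u v) * (x v * x v) from
      (Finset.sum_mul _ _ _).symm, hπ_stat v, hxe v]
    have hvne := (hs v).ne'
    field_simp
    linear_combination (-(z v * z v)) * hsq v
  have e3 : z ⬝ᵥ (1 : Matrix (Fin n) (Fin n) ℝ).mulVec z = ∑ u, z u * z u := by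
    simp [dotProduct, Matrix.one_mulVec]
  have expand2 : ∑ u, ∑ v, (2⁻¹ : ℝ) * (π u * P u v) * (x u - x v) ^ 2
      = (2⁻¹ : ℝ) * (∑ u, ∑ v, π u * P u v * (x u * x u))
        + (2⁻¹ : ℝ) * (∑ u, ∑ v, π u * P u v * (x v * x v))
        - ∑ u, ∑ v, π u * P u v * (x u * x v) := by
    rw [Finset.mul_sum, Finset.mul_sum, ← Finset.sum_add_distrib,
      ← Finset.sum_sub_distrib]
    refine Finset.sum_congr rfl fun u _ => ?_
    rw [Finset.mul_sum, Finset.mul_sum, ← Finset.sum_add_distrib,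
      ← Finset.sum_sub_distrib]
    exact Finset.sum_congr rfl fun v _ => by ring
  have key : z ⬝ᵥ (1 - (2⁻¹ : ℝ) •
        (Matrix.diagonal (fun i => Real.sqrt (π i)) * P *
            Matrix.diagonal (fun i => 1 / Real.sqrt (π i)) +
          Matrix.diagonal (fun i => 1 / Real.sqrt (π i)) * Pᵀ *
            Matrix.diagonal (fun i => Real.sqrt (π i)))).mulVec z
      = ∑ u, ∑ v, (2⁻¹ : ℝ) * (π u * P u v) * (x u - x v) ^ 2 := by
    rw [Matrix.sub_mulVec, dotProduct_sub, Matrix.smul_mulVec,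
      dotProduct_smul, Matrix.add_mulVec, dotProduct_add, e1, e2, e3,
      expand2, r1, r2]
    simp only [smul_eq_mul]
    ring
  rw [key]
  refine Finset.sum_nonneg fun u _ => Finset.sum_nonneg fun v _ => ?_
  have h1 := mul_nonneg (hπ_pos u).le (hP_nonneg u v)
  positivity
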